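/- If G is a graph of order n ≥ 2 with maximum degree Δ, then for every t ≥ 2: 2^{t-1}·max(n+2, 2(Δ+2)) - 2 ≤ λ(M^t(G)) ≤ (2^t - 1)(n+1) + λ(G). -/

import Mathlib

open SimpleGraph

abbrev MycVert (V : Type) : Type := V ⊕ V ⊕ Unit

def mycAdj {V : Type} (G : SimpleGraph V) : MycVert V → MycVert V → Prop
  | Sum.inl a, Sum.inl b => G.Adj a b
  | Sum.inl a, Sum.inr (Sum.inl b) => G.Adj a b
  | Sum.inr (Sum.inl a), Sum.inl b => G.Adj a b
  | Sum.inr (Sum.inl _), Sum.inr (Sum.inr _) => True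
  | Sum.inr (Sum.inr _), Sum.inr (Sum.inl _) => True
  | _, _ => False

/-- The Mycielski graph of `G`: `Sum.inl v` are original vertices, `Sum.inr (Sum.inl v)`
their copies, and `Sum.inr (Sum.inr ())` is the root. -/
def mycielski {V : Type} (G : SimpleGraph V) : SimpleGraph (MycVert V) where
  Adj := mycAdj G
  symm := ⟨by
    rintro (a | a | a) (b | b | b) h <;>
      first | exact G.symm h | exact G.adj_symm h | trivial | exact h.elim⟩
  loopless := ⟨by
    rintro (a | a | a) h <;> first | exact G.loopless a h | exact G.irrefl h | exact h⟩

def IterMycVert (V : Type) : ℕ → Type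
  | 0 => V
  | t + 1 => MycVert (IterMycVert V t)

/-- The `t`-th iterated Mycielski graph. -/
def iterMycielski {V : Type} (G : SimpleGraph V) : (t : ℕ) → SimpleGraph (IterMycVert V t)
  | 0 => G
  | t + 1 => mycielski (iterMycielski G t)

instance iterMycVertFintype (V : Type) [Fintype V] : (t : ℕ) → Fintype (IterMycVert V t)
  | 0 => inferInstanceAs (Fintype V)
  | t + 1 => letI := iterMycVertFintype V t
             inferInstanceAs (Fintype (MycVert (IterMycVert V t)))

/-- `f` is an `L(2,1)`-labeling of `G`. -/
def IsL21Labeling {V : Type} (G : SimpleGraph V) (f : V → ℕ) : Prop :=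
  (∀ x y, G.Adj x y → 2 ≤ ((f x : ℤ) - (f y : ℤ)).natAbs) ∧
  (∀ x y, G.dist x y = 2 → f x ≠ f y)

/-- The `L(2,1)`-labeling number `λ(G)`: the least `k` such that `G` has an
`L(2,1)`-labeling with labels in `{0, …, k}`. -/
noncomputable def lambdaNumber {V : Type} (G : SimpleGraph V) : ℕ :=
  sInf {k | ∃ f : V → ℕ, IsL21Labeling G f ∧ ∀ v, f v ≤ k}

/-! ### Auxiliary machinery -/

section Aux

open scoped Classical

variable {V : Type}

/-- In a set with this property, any two distinct vertices are at distance at most 2,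
with all witnesses inside the set. -/
def GoodSet (G : SimpleGraph V) (S : Finset V) : Prop :=
  (∀ x ∈ S, ∀ y ∈ S, x ≠ y → G.Adj x y ∨ ∃ z ∈ S, G.Adj x z ∧ G.Adj z y) ∧
  (∀ x ∈ S, ∃ z ∈ S, G.Adj x z)

lemma dist_eq_two_of {G : SimpleGraph V} {x y z : V} (hxy : x ≠ y) (hnadj : ¬ G.Adj x y)
    (h1 : G.Adj x z) (h2 : G.Adj z y) : G.dist x y = 2 := by
  have hle : G.dist x y ≤ 2 := by
    simpa using SimpleGraph.dist_le (Walk.cons h1 (Walk.cons h2 Walk.nil))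
  have h0 : G.dist x y ≠ 0 := by
    rw [SimpleGraph.dist_ne_zero_iff_ne_and_reachable]
    exact ⟨hxy, ⟨Walk.cons h1 (Walk.cons h2 Walk.nil)⟩⟩
  have h1' : G.dist x y ≠ 1 := by
    rw [Ne, SimpleGraph.dist_eq_one_iff_adj]; exact hnadj
  omega

lemma of_dist_two {G : SimpleGraph V} {x y : V} (h : G.dist x y = 2) :
    x ≠ y ∧ ¬ G.Adj x y ∧ ∃ z, G.Adj x z ∧ G.Adj z y := by
  have hne : x ≠ y := by rintro rfl; rw [SimpleGraph.dist_self] at h; omega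
  have hnadj : ¬ G.Adj x y := fun ha => by
    rw [← SimpleGraph.dist_eq_one_iff_adj] at ha; omega
  obtain ⟨p, hp⟩ := SimpleGraph.exists_walk_of_dist_ne_zero (by omega : G.dist x y ≠ 0)
  rw [h] at hp
  refine ⟨hne, hnadj, ?_⟩
  cases p with
  | nil => simp at hp
  | cons h1 q =>
    cases q with
    | nil => simp at hp
    | cons h2 r =>
      cases r with
      | nil => exact ⟨_, h1, h2⟩
      | cons h3 s => simp [SimpleGraph.Walk.length_cons] at hp

lemma l21_ne_of_adj {G : SimpleGraph V} {f : V → ℕ} (hf : IsL21Labeling G f) {x y : V}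
    (h : G.Adj x y) : f x ≠ f y := by
  have := hf.1 x y h
  intro he; rw [he] at this; simp at this

lemma GoodSet.card_le {G : SimpleGraph V} {S : Finset V} (hS : GoodSet G S)
    {f : V → ℕ} (hf : IsL21Labeling G f) {k : ℕ} (hk : ∀ v, f v ≤ k) :
    S.card ≤ k + 1 := by
  have hinj : Set.InjOn f S := by
    intro x hx y hy he
    by_contra hne
    rcases hS.1 x hx y hy hne with hadj | ⟨z, _, h1, h2⟩
    · exact l21_ne_of_adj hf hadj he
    · by_cases hadj : G.Adj x y
      · exact l21_ne_of_adj hf hadj he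
      · exact hf.2 x y (dist_eq_two_of hne hadj h1 h2) he
  calc S.card = (S.image f).card := (Finset.card_image_of_injOn hinj).symm
    _ ≤ (Finset.range (k + 1)).card := by
        refine Finset.card_le_card ?_
        intro m hm
        simp only [Finset.mem_image] at hm
        obtain ⟨v, _, rfl⟩ := hm
        simpa using Nat.lt_succ_of_le (hk v)
    _ = k + 1 := Finset.card_range _

def mycRoot (V : Type) : MycVert V := Sum.inr (Sum.inr ())

noncomputable def mycSet (S : Finset V) : Finset (MycVert V) :=
  S.image Sum.inl ∪ S.image (fun x => Sum.inr (Sum.inl x)) ∪ {mycRoot V}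

lemma mem_mycSet {S : Finset V} {x : MycVert V} :
    x ∈ mycSet S ↔ (∃ a ∈ S, x = Sum.inl a) ∨ (∃ a ∈ S, x = Sum.inr (Sum.inl a)) ∨
      x = mycRoot V := by
  simp [mycSet, or_assoc, eq_comm]
  exact or_comm.trans or_assoc

lemma mycSet_card (S : Finset V) : (mycSet S).card = 2 * S.card + 1 := by
  rw [mycSet]
  rw [Finset.card_union_of_disjoint, Finset.card_union_of_disjoint]
  · rw [Finset.card_image_of_injective _ Sum.inl_injective,
      Finset.card_image_of_injective, Finset.card_singleton]
    · ring
    · intro a b h; simpa using h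
  · simp [Finset.disjoint_left]
  · simp [Finset.disjoint_left, mycRoot]

lemma goodSet_mycSet {G : SimpleGraph V} {S : Finset V} (hS : GoodSet G S) (hne : S.Nonempty) :
    GoodSet (mycielski G) (mycSet S) ∧ (mycSet S).Nonempty := by
  obtain ⟨v0, hv0⟩ := hne
  have hrootmem : mycRoot V ∈ mycSet S := by rw [mem_mycSet]; tauto
  have hinlmem : ∀ a ∈ S, Sum.inl a ∈ mycSet S := by
    intro a ha; rw [mem_mycSet]; exact Or.inl ⟨a, ha, rfl⟩
  have hinrmem : ∀ a ∈ S, Sum.inr (Sum.inl a) ∈ mycSet S := by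
    intro a ha; rw [mem_mycSet]; exact Or.inr (Or.inl ⟨a, ha, rfl⟩)
  constructor
  constructor
  · intro x hx y hy hxy
    rw [mem_mycSet] at hx hy
    rcases hx with ⟨a, ha, rfl⟩ | ⟨a, ha, rfl⟩ | rfl <;>
      rcases hy with ⟨b, hb, rfl⟩ | ⟨b, hb, rfl⟩ | rfl
    · have hab : a ≠ b := by intro h; exact hxy (by rw [h])
      rcases hS.1 a ha b hb hab with hadj | ⟨z, hz, h1, h2⟩
      · exact Or.inl hadj
      · exact Or.inr ⟨Sum.inl z, hinlmem z hz, h1, h2⟩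
    · by_cases hab : a = b
      · subst hab
        obtain ⟨z, hz, hza⟩ := hS.2 a ha
        exact Or.inr ⟨Sum.inl z, hinlmem z hz, hza, G.adj_symm hza⟩
      · rcases hS.1 a ha b hb hab with hadj | ⟨z, hz, h1, h2⟩
        · exact Or.inl hadj
        · exact Or.inr ⟨Sum.inl z, hinlmem z hz, h1, h2⟩
    · obtain ⟨z, hz, hza⟩ := hS.2 a ha
      exact Or.inr ⟨Sum.inr (Sum.inl z), hinrmem z hz, hza, trivial⟩
    · by_cases hab : a = b
      · subst hab
        obtain ⟨z, hz, hza⟩ := hS.2 a ha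
        exact Or.inr ⟨Sum.inl z, hinlmem z hz, hza, G.adj_symm hza⟩
      · rcases hS.1 a ha b hb hab with hadj | ⟨z, hz, h1, h2⟩
        · exact Or.inl hadj
        · exact Or.inr ⟨Sum.inl z, hinlmem z hz, h1, h2⟩
    · exact Or.inr ⟨mycRoot V, hrootmem, trivial, trivial⟩
    · exact Or.inl trivial
    · obtain ⟨z, hz, hzb⟩ := hS.2 b hb
      exact Or.inr ⟨Sum.inr (Sum.inl z), hinrmem z hz, trivial, G.adj_symm hzb⟩
    · exact Or.inl trivial
    · exact absurd rfl hxy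
  · intro x hx
    rw [mem_mycSet] at hx
    rcases hx with ⟨a, ha, rfl⟩ | ⟨a, ha, rfl⟩ | rfl
    · obtain ⟨z, hz, hza⟩ := hS.2 a ha
      exact ⟨Sum.inl z, hinlmem z hz, hza⟩
    · exact ⟨mycRoot V, hrootmem, trivial⟩
    · exact ⟨Sum.inr (Sum.inl v0), hinrmem v0 hv0, trivial⟩
  · exact ⟨mycRoot V, hrootmem⟩

/-- The star: root together with all copies. -/
lemma goodSet_star [Fintype V] [Nonempty V] (G : SimpleGraph V) :
    ∃ S : Finset (MycVert V), GoodSet (mycielski G) S ∧ S.Nonempty ∧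
      S.card = Fintype.card V + 1 := by
  refine ⟨Finset.univ.image (fun x : V => Sum.inr (Sum.inl x)) ∪ {mycRoot V},
    ⟨?_, ?_⟩, ⟨mycRoot V, by simp⟩, ?_⟩
  · intro x hx y hy hxy
    simp only [Finset.mem_union, Finset.mem_image, Finset.mem_univ, true_and,
      Finset.mem_singleton] at hx hy
    rcases hx with ⟨a, rfl⟩ | rfl <;> rcases hy with ⟨b, rfl⟩ | rfl
    · exact Or.inr ⟨mycRoot V, by simp, trivial, trivial⟩
    · exact Or.inl trivial
    · exact Or.inl trivial
    · exact absurd rfl hxy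
  · intro x hx
    simp only [Finset.mem_union, Finset.mem_image, Finset.mem_univ, true_and,
      Finset.mem_singleton] at hx
    rcases hx with ⟨a, rfl⟩ | rfl
    · exact ⟨mycRoot V, by simp, trivial⟩
    · exact ⟨Sum.inr (Sum.inl (Classical.arbitrary V)), by simp, trivial⟩
  · rw [Finset.card_union_of_disjoint (by simp [Finset.disjoint_left, mycRoot])]
    rw [Finset.card_image_of_injective, Finset.card_univ, Finset.card_singleton]
    intro a b h; simpa using h

/-- The degree-based good set: root, all copies of the closed neighborhood of `v`,
`v` itself and its neighbors. -/
lemma goodSet_degree [Fintype V] (G : SimpleGraph V) (v : V) (h1 : 1 ≤ G.degree v) :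
    ∃ S : Finset (MycVert V), GoodSet (mycielski G) S ∧ S.Nonempty ∧
      S.card = 2 * G.degree v + 3 := by
  obtain ⟨y0, hy0⟩ : ∃ y, y ∈ G.neighborFinset v := Finset.card_pos.mp h1
  have hy0' : G.Adj v y0 := by rwa [SimpleGraph.mem_neighborFinset] at hy0
  set N := G.neighborFinset v with hNdef
  have hadjN : ∀ a, a ∈ N → G.Adj v a := by
    intro a ha; rwa [hNdef, SimpleGraph.mem_neighborFinset] at ha
  have hvN : v ∉ N := by
    intro hv; exact G.irrefl (hadjN v hv)
  refine ⟨((insert v N).image (fun x => Sum.inr (Sum.inl x))) ∪ (N.image Sum.inl) ∪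
    {Sum.inl v, mycRoot V}, ⟨?_, ?_⟩, ?_, ?_⟩
  case _ =>
    intro x hx y hy hxy
    have hmemx := hx
    have hmemy := hy
    simp only [Finset.mem_union, Finset.mem_image, Finset.mem_insert,
      Finset.mem_singleton] at hmemx hmemy
    have hCmem : ∀ a, (a = v ∨ a ∈ N) → (Sum.inr (Sum.inl a) : MycVert V) ∈
        ((insert v N).image (fun x => Sum.inr (Sum.inl x))) ∪ (N.image Sum.inl) ∪
        {Sum.inl v, mycRoot V} := by
      intro a ha
      simp only [Finset.mem_union, Finset.mem_image, Finset.mem_insert, Finset.mem_singleton]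
      exact Or.inl (Or.inl ⟨a, ha, rfl⟩)
    have hLmem : ∀ a, a ∈ N → (Sum.inl a : MycVert V) ∈
        ((insert v N).image (fun x => Sum.inr (Sum.inl x))) ∪ (N.image Sum.inl) ∪
        {Sum.inl v, mycRoot V} := by
      intro a ha
      simp only [Finset.mem_union, Finset.mem_image, Finset.mem_insert, Finset.mem_singleton]
      exact Or.inl (Or.inr ⟨a, ha, rfl⟩)
    have hLv : (Sum.inl v : MycVert V) ∈
        ((insert v N).image (fun x => Sum.inr (Sum.inl x))) ∪ (N.image Sum.inl) ∪
        {Sum.inl v, mycRoot V} := by simp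
    have hRm : (mycRoot V) ∈
        ((insert v N).image (fun x => Sum.inr (Sum.inl x))) ∪ (N.image Sum.inl) ∪
        {Sum.inl v, mycRoot V} := by simp
    rcases hmemx with (⟨a, ha, rfl⟩ | ⟨a, ha, rfl⟩) | (rfl | rfl) <;>
      rcases hmemy with (⟨b, hb, rfl⟩ | ⟨b, hb, rfl⟩) | (rfl | rfl)
    · -- C a, C b
      exact Or.inr ⟨mycRoot V, hRm, trivial, trivial⟩
    · -- C a, L b
      rcases ha with rfl | haN
      · exact Or.inl (hadjN b hb)
      · by_cases hab : G.Adj a b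
        · exact Or.inl hab
        · exact Or.inr ⟨Sum.inl v, hLv, G.adj_symm (hadjN a haN), hadjN b hb⟩
    · -- C a, Lv
      rcases ha with rfl | haN
      · exact Or.inr ⟨Sum.inl y0, hLmem y0 hy0, hy0', G.adj_symm hy0'⟩
      · exact Or.inl (G.adj_symm (hadjN a haN))
    · -- C a, root
      exact Or.inl trivial
    · -- L a, C b
      rcases hb with rfl | hbN
      · exact Or.inl (G.adj_symm (hadjN a ha))
      · by_cases hab : G.Adj a b
        · exact Or.inl hab
        · exact Or.inr ⟨Sum.inl v, hLv, G.adj_symm (hadjN a ha), hadjN b hbN⟩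
    · -- L a, L b
      by_cases hab : G.Adj a b
      · exact Or.inl hab
      · exact Or.inr ⟨Sum.inl v, hLv, G.adj_symm (hadjN a ha), hadjN b hb⟩
    · -- L a, Lv
      exact Or.inl (G.adj_symm (hadjN a ha))
    · -- L a, root
      exact Or.inr ⟨Sum.inr (Sum.inl v), hCmem v (Or.inl rfl), G.adj_symm (hadjN a ha), trivial⟩
    · -- Lv, C b
      rcases hb with rfl | hbN
      · exact Or.inr ⟨Sum.inl y0, hLmem y0 hy0, hy0', G.adj_symm hy0'⟩
      · exact Or.inl (hadjN b hbN)
    · -- Lv, L b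
      exact Or.inl (hadjN b hb)
    · -- Lv, Lv
      exact absurd rfl hxy
    · -- Lv, root
      exact Or.inr ⟨Sum.inr (Sum.inl y0), hCmem y0 (Or.inr hy0), hy0', trivial⟩
    · -- root, C b
      exact Or.inl trivial
    · -- root, L b
      exact Or.inr ⟨Sum.inr (Sum.inl v), hCmem v (Or.inl rfl), trivial, hadjN b hb⟩
    · -- root, Lv
      exact Or.inr ⟨Sum.inr (Sum.inl y0), hCmem y0 (Or.inr hy0), trivial, G.adj_symm hy0'⟩
    · -- root, root
      exact absurd rfl hxy
  case _ =>
    intro x hx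
    have hmemx := hx
    simp only [Finset.mem_union, Finset.mem_image, Finset.mem_insert,
      Finset.mem_singleton] at hmemx
    rcases hmemx with (⟨a, ha, rfl⟩ | ⟨a, ha, rfl⟩) | (rfl | rfl)
    · exact ⟨mycRoot V, by simp, trivial⟩
    · exact ⟨Sum.inl v, by simp, G.adj_symm (hadjN a ha)⟩
    · exact ⟨Sum.inl y0, by
        simp only [Finset.mem_union, Finset.mem_image, Finset.mem_insert, Finset.mem_singleton]
        exact Or.inl (Or.inr ⟨y0, hy0, rfl⟩), hadjN y0 hy0⟩
    · exact ⟨Sum.inr (Sum.inl v), by simp, trivial⟩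
  case _ =>
    exact ⟨mycRoot V, by simp⟩
  case _ =>
    rw [Finset.card_union_of_disjoint, Finset.card_union_of_disjoint]
    · rw [Finset.card_image_of_injective, Finset.card_image_of_injective _ Sum.inl_injective,
        Finset.card_insert_of_notMem hvN]
      · have : ({Sum.inl v, mycRoot V} : Finset (MycVert V)).card = 2 := by
          rw [Finset.card_insert_of_notMem (by simp [mycRoot]), Finset.card_singleton]
        rw [this]
        show N.card + 1 + N.card + 2 = 2 * N.card + 3
        ring
      · intro a b h; simpa using h
    · simp [Finset.disjoint_left]
    · simp [Finset.disjoint_left, mycRoot]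
      exact hvN

lemma l21_exists {W : Type} [Fintype W] (X : SimpleGraph W) :
    ∃ f, IsL21Labeling X f ∧ ∀ v, f v ≤ 2 * Fintype.card W := by
  refine ⟨fun w => 2 * ((Fintype.equivFin W) w : ℕ), ⟨?_, ?_⟩, ?_⟩
  · intro x y h
    have hxy : x ≠ y := X.ne_of_adj h
    have hv : ((Fintype.equivFin W) x : ℕ) ≠ ((Fintype.equivFin W) y : ℕ) := by
      intro he; exact hxy ((Fintype.equivFin W).injective (Fin.val_injective he))
    dsimp only
    omega
  · intro x y h
    have hxy : x ≠ y := (of_dist_two h).1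
    have hv : ((Fintype.equivFin W) x : ℕ) ≠ ((Fintype.equivFin W) y : ℕ) := by
      intro he; exact hxy ((Fintype.equivFin W).injective (Fin.val_injective he))
    dsimp only
    omega
  · intro w
    have := ((Fintype.equivFin W) w).isLt
    dsimp only
    omega

/-- The labeling of the Mycielskian built from a labeling of the base graph. -/
noncomputable def upFun {W : Type} (f : W → ℕ) (s : ℕ) (x₀ : W) (ρ : W → ℕ) :
    MycVert W → ℕ
  | Sum.inl x => if f x = s then s + 1 else f x
  | Sum.inr (Sum.inl x) => if x = x₀ then s + 2 else s + 3 + ρ x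
  | Sum.inr (Sum.inr _) => s

lemma lambda_mycielski_le {W : Type} [Fintype W] [Nonempty W] (X : SimpleGraph W) :
    lambdaNumber (mycielski X) ≤ lambdaNumber X + Fintype.card W + 1 := by
  have hsetne : {k | ∃ f, IsL21Labeling X f ∧ ∀ v, f v ≤ k}.Nonempty :=
    ⟨2 * Fintype.card W, l21_exists X⟩
  obtain ⟨f, hf, hfk⟩ := Nat.sInf_mem hsetne
  obtain ⟨x₀, -, hx₀⟩ := Finset.exists_max_image (Finset.univ : Finset W) f
    ⟨Classical.arbitrary W, Finset.mem_univ _⟩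
  set s := f x₀ with hsdef
  have hs_le : ∀ w : W, f w ≤ s := fun w => hx₀ w (Finset.mem_univ w)
  have hN1 : 1 ≤ Fintype.card W := Fintype.card_pos
  obtain ⟨ρ, hπlt, hπinj⟩ : ∃ ρ : W → ℕ, (∀ x : W, x ≠ x₀ → ρ x ≤ Fintype.card W - 2) ∧
      (∀ x y : W, x ≠ y → ρ x ≠ ρ y) := by
    set e := Fintype.equivFin W with hedef
    set π : W ≃ Fin (Fintype.card W) :=
      e.trans (Equiv.swap (e x₀) ⟨Fintype.card W - 1, by omega⟩) with hπ
    have hπx₀ : (π x₀ : ℕ) = Fintype.card W - 1 := by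
      simp [hπ, Equiv.swap_apply_left]
    refine ⟨fun x => (π x : ℕ), ?_, ?_⟩
    · intro x hx
      dsimp only
      have hlt : (π x : ℕ) < Fintype.card W := (π x).isLt
      have hne' : (π x : ℕ) ≠ Fintype.card W - 1 := by
        intro he
        exact hx (π.injective (Fin.val_injective (by rw [he, hπx₀])))
      omega
    · intro x y hxy he
      exact hxy (π.injective (Fin.val_injective he))
  have cond1 : ∀ p q, (mycielski X).Adj p q →
      2 ≤ ((upFun f s x₀ ρ p : ℤ) - (upFun f s x₀ ρ q : ℤ)).natAbs := by
    rintro (a | a | a) (b | b | b) h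
    · have h2 := hf.1 a b h
      have ha := hs_le a; have hb := hs_le b
      simp only [upFun]
      by_cases h3 : f a = s <;> by_cases h4 : f b = s <;> simp [h3, h4] <;> omega
    · have h' : X.Adj a b := h
      have ha := hs_le a; have hb := hs_le b
      simp only [upFun]
      by_cases h4 : b = x₀
      · subst h4
        have h2 := hf.1 a b h'
        rw [if_pos rfl]
        by_cases h3 : f a = s <;> [rw [if_pos h3]; rw [if_neg h3]] <;> omega
      · rw [if_neg h4]
        by_cases h3 : f a = s <;> [rw [if_pos h3]; rw [if_neg h3]] <;> omega
    · exact h.elim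
    · have h' : X.Adj a b := h
      have ha := hs_le a; have hb := hs_le b
      simp only [upFun]
      by_cases h4 : a = x₀
      · subst h4
        have h2 := hf.1 a b h'
        rw [if_pos rfl]
        by_cases h3 : f b = s <;> [rw [if_pos h3]; rw [if_neg h3]] <;> omega
      · rw [if_neg h4]
        by_cases h3 : f b = s <;> [rw [if_pos h3]; rw [if_neg h3]] <;> omega
    · exact h.elim
    · simp only [upFun]
      by_cases h4 : a = x₀
      · rw [if_pos h4]; omega
      · rw [if_neg h4]; omega
    · exact h.elim
    · simp only [upFun]
      by_cases h4 : b = x₀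
      · rw [if_pos h4]; omega
      · rw [if_neg h4]; omega
    · exact h.elim
  have cond2 : ∀ p q, (mycielski X).dist p q = 2 → upFun f s x₀ ρ p ≠ upFun f s x₀ ρ q := by
    intro p q hd
    obtain ⟨hpq, hnadj, z, h1, h2⟩ := of_dist_two hd
    rcases p with a | a | a <;> rcases q with b | b | b
    · have hab : a ≠ b := fun h => hpq (by rw [h])
      have hnadj' : ¬ X.Adj a b := hnadj
      have hcom : ∃ c, X.Adj a c ∧ X.Adj c b := by
        rcases z with c | c | c
        · exact ⟨c, h1, h2⟩
        · exact ⟨c, h1, h2⟩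
        · exact h1.elim
      obtain ⟨c, hc1, hc2⟩ := hcom
      have hfne : f a ≠ f b := hf.2 a b (dist_eq_two_of hab hnadj' hc1 hc2)
      have ha := hs_le a; have hb := hs_le b
      simp only [upFun]
      by_cases h3 : f a = s <;> by_cases h4 : f b = s <;> simp [h3, h4] <;> omega
    · have ha := hs_le a
      simp only [upFun]
      by_cases h4 : b = x₀ <;> by_cases h3 : f a = s <;>
        [rw [if_pos h4, if_pos h3]; rw [if_pos h4, if_neg h3];
         rw [if_neg h4, if_pos h3]; rw [if_neg h4, if_neg h3]] <;> omega
    · have ha := hs_le a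
      simp only [upFun]
      by_cases h3 : f a = s <;> simp [h3] <;> omega
    · have hb := hs_le b
      simp only [upFun]
      by_cases h4 : a = x₀ <;> by_cases h3 : f b = s <;>
        [rw [if_pos h4, if_pos h3]; rw [if_pos h4, if_neg h3];
         rw [if_neg h4, if_pos h3]; rw [if_neg h4, if_neg h3]] <;> omega
    · have hab : a ≠ b := fun h => hpq (by rw [h])
      simp only [upFun]
      by_cases h3 : a = x₀ <;> by_cases h4 : b = x₀
      · exact absurd (h3.trans h4.symm) hab
      · have := hπlt b h4
        rw [if_pos h3, if_neg h4]
        omega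
      · have := hπlt a h3
        rw [if_neg h3, if_pos h4]
        omega
      · have := hπinj a b hab
        rw [if_neg h3, if_neg h4]
        omega
    · simp only [upFun]
      by_cases h3 : a = x₀
      · rw [if_pos h3]; omega
      · rw [if_neg h3]; omega
    · have hb := hs_le b
      simp only [upFun]
      by_cases h3 : f b = s <;> simp [h3] <;> omega
    · simp only [upFun]
      by_cases h3 : b = x₀
      · rw [if_pos h3]; omega
      · rw [if_neg h3]; omega
    · exact absurd rfl hpq
  have hbound : ∀ z, upFun f s x₀ ρ z ≤ s + Fintype.card W + 1 := by
    rintro (x | x | x)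
    · have := hs_le x
      simp only [upFun]
      by_cases h3 : f x = s <;> simp [h3] <;> omega
    · simp only [upFun]
      by_cases h3 : x = x₀
      · rw [if_pos h3]; omega
      · have := hπlt x h3
        have hN2 : 1 < Fintype.card W := Fintype.one_lt_card_iff_nontrivial.mpr ⟨⟨x, x₀, h3⟩⟩
        rw [if_neg h3]
        omega
    · simp only [upFun]; omega
  have hmem : (s + Fintype.card W + 1) ∈
      {k | ∃ g, IsL21Labeling (mycielski X) g ∧ ∀ v, g v ≤ k} :=
    ⟨upFun f s x₀ ρ, ⟨cond1, cond2⟩, hbound⟩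
  have hle := Nat.sInf_le hmem
  calc lambdaNumber (mycielski X) ≤ s + Fintype.card W + 1 := hle
    _ ≤ lambdaNumber X + Fintype.card W + 1 :=
      Nat.add_le_add_right (Nat.add_le_add_right (hfk x₀) _) 1

lemma card_mycVert (W : Type) [Fintype W] :
    Fintype.card (MycVert W) = 2 * Fintype.card W + 1 := by
  rw [Fintype.card_sum, Fintype.card_sum, Fintype.card_unit]
  ring

lemma card_iterMycVert (V : Type) [Fintype V] (t : ℕ) :
    Fintype.card (IterMycVert V t) = 2 ^ t * (Fintype.card V + 1) - 1 := by
  induction t with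
  | zero =>
    show Fintype.card V = 2 ^ 0 * (Fintype.card V + 1) - 1
    rw [pow_zero, one_mul]
    omega
  | succ m ih =>
    have h0 : 0 < 2 ^ m * (Fintype.card V + 1) :=
      Nat.mul_pos (Nat.pow_pos (by norm_num)) (by omega)
    have e1 : Fintype.card (IterMycVert V (m + 1)) =
        2 * Fintype.card (IterMycVert V m) + 1 := by
      rw [← card_mycVert (IterMycVert V m)]
      exact Fintype.card_congr (Equiv.refl _)
    rw [e1, ih, pow_succ]
    have e2 : 2 ^ m * 2 * (Fintype.card V + 1) = 2 * (2 ^ m * (Fintype.card V + 1)) := by ring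
    rw [e2]
    omega

lemma nonempty_iterMycVert (V : Type) [Nonempty V] (t : ℕ) :
    Nonempty (IterMycVert V t) := by
  induction t with
  | zero => exact ‹Nonempty V›
  | succ m ih => exact ⟨mycRoot (IterMycVert V m)⟩

lemma exists_good_iter {V : Type} (G : SimpleGraph V) (S₀ : Finset (MycVert V))
    (h : GoodSet (mycielski G) S₀) (hne : S₀.Nonempty) (j : ℕ) :
    ∃ S : Finset (IterMycVert V (j + 1)),
      GoodSet (iterMycielski G (j + 1)) S ∧ S.Nonempty ∧
      S.card = 2 ^ j * (S₀.card + 1) - 1 := by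
  induction j with
  | zero =>
    refine ⟨S₀, h, hne, ?_⟩
    rw [pow_zero, one_mul]
    exact (Nat.add_sub_cancel _ _).symm
  | succ m ih =>
    obtain ⟨S, hS, hSne, hcard⟩ := ih
    obtain ⟨hg, hne'⟩ := goodSet_mycSet hS hSne
    refine ⟨mycSet S, hg, hne', ?_⟩
    refine (mycSet_card S).trans ?_
    rw [hcard]
    have h0 : 0 < 2 ^ m * (S₀.card + 1) :=
      Nat.mul_pos (Nat.pow_pos (by norm_num)) (by omega)
    have e2 : 2 ^ (m + 1) * (S₀.card + 1) = 2 * (2 ^ m * (S₀.card + 1)) := by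
      rw [pow_succ]; ring
    rw [e2]
    omega

lemma lower_bound_of_base {V : Type} [Fintype V] (G : SimpleGraph V) {S₀ : Finset (MycVert V)}
    (h : GoodSet (mycielski G) S₀) (hne : S₀.Nonempty) (u : ℕ) {k : ℕ}
    (f : IterMycVert V (u + 1) → ℕ) (hf : IsL21Labeling (iterMycielski G (u + 1)) f)
    (hfk : ∀ v, f v ≤ k) : 2 ^ u * (S₀.card + 1) ≤ k + 2 := by
  obtain ⟨S, hS, -, hcard⟩ := exists_good_iter G S₀ h hne u
  have hle := hS.card_le hf hfk
  have hpos : 0 < 2 ^ u * (S₀.card + 1) :=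
    Nat.mul_pos (Nat.pow_pos (by norm_num)) (by omega)
  omega

end Aux

open scoped Classical in
/-- If `G` is a graph of order `n ≥ 2` with maximum degree `Δ`, then for every `t ≥ 2`:
`2^(t-1) * max (n+2) (2(Δ+2)) - 2 ≤ λ(M^t(G)) ≤ (2^t - 1)(n+1) + λ(G)`. -/
theorem lambdaNumber_iterMycielski_bounds {V : Type} [Fintype V] (G : SimpleGraph V)
    (n : ℕ) (hn : Fintype.card V = n) (h2 : 2 ≤ n) (t : ℕ) (ht : 2 ≤ t) :
    2 ^ (t - 1) * max (n + 2) (2 * (G.maxDegree + 2)) - 2 ≤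
        lambdaNumber (iterMycielski G t) ∧
    lambdaNumber (iterMycielski G t) ≤ (2 ^ t - 1) * (n + 1) + lambdaNumber G := by
  have hVne : Nonempty V := Fintype.card_pos_iff.mp (by omega)
  obtain ⟨u, rfl⟩ : ∃ u, t = u + 1 := ⟨t - 1, by omega⟩
  have hupper : ∀ s : ℕ,
      lambdaNumber (iterMycielski G s) ≤ (2 ^ s - 1) * (n + 1) + lambdaNumber G := by
    intro s
    induction s with
    | zero =>
      show lambdaNumber G ≤ (2 ^ 0 - 1) * (n + 1) + lambdaNumber G
      norm_num
    | succ m ih =>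
      have hNE : Nonempty (IterMycVert V m) := nonempty_iterMycVert V m
      have hstep : lambdaNumber (iterMycielski G (m + 1)) ≤
          lambdaNumber (iterMycielski G m) + Fintype.card (IterMycVert V m) + 1 :=
        lambda_mycielski_le (iterMycielski G m)
      have hcard : Fintype.card (IterMycVert V m) = 2 ^ m * (n + 1) - 1 := by
        rw [card_iterMycVert, hn]
      have h0 : (n + 1) ≤ 2 ^ m * (n + 1) :=
        Nat.le_mul_of_pos_left _ (Nat.pow_pos (by norm_num))
      have e1 : (2 ^ m - 1) * (n + 1) = 2 ^ m * (n + 1) - (n + 1) := by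
        rw [Nat.sub_mul, one_mul]
      have e2 : (2 ^ (m + 1) - 1) * (n + 1) = 2 * (2 ^ m * (n + 1)) - (n + 1) := by
        rw [Nat.sub_mul, one_mul, pow_succ]
        ring_nf
      rw [hcard] at hstep
      rw [e1] at ih
      rw [e2]
      generalize hP : 2 ^ m * (n + 1) = P at hstep ih h0 ⊢
      omega
  refine ⟨?_, hupper (u + 1)⟩
  have hsetne : {k | ∃ f, IsL21Labeling (iterMycielski G (u + 1)) f ∧ ∀ v, f v ≤ k}.Nonempty :=
    ⟨2 * Fintype.card (IterMycVert V (u + 1)), l21_exists _⟩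
  obtain ⟨f, hf, hfk⟩ := Nat.sInf_mem hsetne
  have hlow : 2 ^ u * (max (n + 2) (2 * (G.maxDegree + 2))) ≤
      lambdaNumber (iterMycielski G (u + 1)) + 2 := by
    rcases le_or_gt (2 * (G.maxDegree + 2)) (n + 2) with hc | hc
    · rw [max_eq_left hc]
      obtain ⟨S₀, hS₀, hS₀ne, hcard⟩ := goodSet_star G
      have hb := lower_bound_of_base G hS₀ hS₀ne u f hf hfk
      rw [hcard, hn] at hb
      exact hb
    · rw [max_eq_right (le_of_lt hc)]
      have hΔ1 : 1 ≤ G.maxDegree := by omega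
      obtain ⟨v, hv⟩ := G.exists_maximal_degree_vertex
      have hdeg1 : 1 ≤ G.degree v := by omega
      obtain ⟨S₀, hS₀, hS₀ne, hcard⟩ := goodSet_degree G v hdeg1
      have hb := lower_bound_of_base G hS₀ hS₀ne u f hf hfk
      rw [hcard, ← hv] at hb
      have e : 2 * G.maxDegree + 3 + 1 = 2 * (G.maxDegree + 2) := by ring
      rwa [e] at hb
  rw [show u + 1 - 1 = u from rfl]
  exact tsub_le_iff_right.mpr hlow
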